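/- Let A be a self-adjoint operator on a Hilbert space H0, E its projection-valued spectral measure, and B ∈ B(H1, H0) a Hilbert–Schmidt operator. Define V(B) = sup over finite measurable partitions {δ_k} of σ(A) of Σ_k ‖B* E(δ_k) B‖. Then ‖B‖² ≤ V(B) ≤ ‖B‖₂², where ‖B‖₂ is the Hilbert–Schmidt norm. -/

import Mathlib

set_option linter.unusedVariables false

/-- `R` is a two-sided bounded inverse of `A - z` on the domain of `A`. -/
def IsBddResolventOf {H : Type*} [NormedAddCommGroup H] [InnerProductSpace ℂ H]
    (A : H →ₗ.[ℂ] H) (z : ℂ) (R : H →L[ℂ] H) : Prop :=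
  (∀ u : A.domain, R (A u - z • (u : H)) = u) ∧
    ∀ v : H, ∃ hv : R v ∈ A.domain, A ⟨R v, hv⟩ - z • R v = v

open scoped InnerProductSpace ComplexConjugate

lemma resolvent_isOpen {H : Type*} [NormedAddCommGroup H] [InnerProductSpace ℂ H]
    [CompleteSpace H] (A : H →ₗ.[ℂ] H) :
    IsOpen {z : ℂ | ∃ R, IsBddResolventOf A z R} := by
  rw [Metric.isOpen_iff]
  rintro z ⟨R, hR1, hR2⟩
  refine ⟨(‖R‖ + 1)⁻¹, by positivity, fun z' hz' => ?_⟩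
  set w : ℂ := z' - z with hw
  have hwz : z' = z + w := by ring
  have ht : ‖w • R‖ < 1 := by
    rw [norm_smul]
    have hw1 : ‖w‖ < (‖R‖ + 1)⁻¹ := by
      simpa [Metric.mem_ball, dist_eq_norm] using hz'
    calc ‖w‖ * ‖R‖ ≤ ‖w‖ * (‖R‖ + 1) := by nlinarith [norm_nonneg w, norm_nonneg R]
      _ < (‖R‖ + 1)⁻¹ * (‖R‖ + 1) := by
          apply mul_lt_mul_of_pos_right hw1; positivity
      _ = 1 := by field_simp
  set U : (H →L[ℂ] H)ˣ := Units.oneSub (w • R) ht with hU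
  set V : H →L[ℂ] H := ((U⁻¹ : (H →L[ℂ] H)ˣ) : H →L[ℂ] H) with hV
  have hUval : (U : H →L[ℂ] H) = 1 - w • R := rfl
  have hVU : V * (U : H →L[ℂ] H) = 1 := U.inv_mul
  have hUV : (U : H →L[ℂ] H) * V = 1 := U.mul_inv
  have hcomm : Commute R (U : H →L[ℂ] H) := by
    rw [hUval]
    unfold Commute SemiconjBy
    simp [mul_sub, sub_mul, mul_smul_comm, smul_mul_assoc]
  have hcomm' : R * V = V * R := (hcomm.units_inv_right).eq
  refine ⟨V * R, fun u => ?_, fun v => ?_⟩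
  · have h1 : (A u : H) - z' • (u : H) = ((A u : H) - z • (u : H)) - w • (u : H) := by
      rw [hwz]; module
    have h2 : R ((A u : H) - z' • (u : H)) = (u : H) - w • R (u : H) := by
      rw [h1, map_sub, hR1 u, map_smul]
    rw [ContinuousLinearMap.mul_apply, h2]
    have h3 : ((u : H) - w • R (u : H)) = (U : H →L[ℂ] H) (u : H) := by
      rw [hUval]; simp
    rw [h3, ← ContinuousLinearMap.mul_apply, hVU, ContinuousLinearMap.one_apply]
  · obtain ⟨hv', heq'⟩ := hR2 (V v)
    have hRv : (V * R) v = R (V v) := by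
      rw [← hcomm']; rfl
    refine ⟨by rw [hRv]; exact hv', ?_⟩
    have hsub : (⟨(V * R) v, by rw [hRv]; exact hv'⟩ : A.domain) = ⟨R (V v), hv'⟩ :=
      Subtype.ext hRv
    rw [hsub, hRv, hwz]
    have h4 : (A ⟨R (V v), hv'⟩ : H) - (z + w) • R (V v)
        = ((A ⟨R (V v), hv'⟩ : H) - z • R (V v)) - w • R (V v) := by module
    rw [h4, heq']
    have h5 : V v - w • R (V v) = (U : H →L[ℂ] H) (V v) := by
      rw [hUval]; simp
    rw [h5, ← ContinuousLinearMap.mul_apply, hUV, ContinuousLinearMap.one_apply]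

open ContinuousLinearMap in
lemma opnorm_sq_le_tsum {H0 H1 : Type*}
    [NormedAddCommGroup H0] [InnerProductSpace ℂ H0] [CompleteSpace H0]
    [NormedAddCommGroup H1] [InnerProductSpace ℂ H1] [CompleteSpace H1]
    {K : Type*} (e : HilbertBasis K ℂ H1) (C : H1 →L[ℂ] H0)
    (hC : Summable fun k : K => ‖C (e k)‖ ^ 2) :
    ‖C‖ ^ 2 ≤ ∑' k : K, ‖C (e k)‖ ^ 2 := by
  set M : ℝ := ∑' k : K, ‖C (e k)‖ ^ 2 with hM
  have hM0 : 0 ≤ M := tsum_nonneg fun k => by positivity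
  have key : ∀ y : H0, ‖adjoint C y‖ ^ 2 ≤ M * ‖y‖ ^ 2 := by
    intro y
    set x : H1 := adjoint C y with hx
    have h1 : HasSum (fun k : K => (⟪x, e k⟫_ℂ * ⟪e k, x⟫_ℂ).re) ((⟪x, x⟫_ℂ).re) :=
      (e.hasSum_inner_mul_inner x x).mapL Complex.reCLM
    have h2 : ∀ k : K, (⟪x, e k⟫_ℂ * ⟪e k, x⟫_ℂ).re = ‖⟪e k, x⟫_ℂ‖ ^ 2 := by
      intro k
      rw [← inner_conj_symm x (e k), ← Complex.normSq_eq_conj_mul_self]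
      rw [Complex.ofReal_re, Complex.normSq_eq_norm_sq]
    have h3 : (⟪x, x⟫_ℂ).re = ‖x‖ ^ 2 := by
      simpa using inner_self_eq_norm_sq (𝕜 := ℂ) x
    simp only [h2, h3] at h1
    have h4 : ‖x‖ ^ 2 ≤ ∑' k : K, ‖C (e k)‖ ^ 2 * ‖y‖ ^ 2 := by
      rw [← h1.tsum_eq]
      refine Summable.tsum_le_tsum (fun k => ?_) h1.summable (hC.mul_right _)
      have h5 : ⟪e k, x⟫_ℂ = ⟪C (e k), y⟫_ℂ := by
        rw [hx, adjoint_inner_right]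
      rw [h5, ← mul_pow]
      have := norm_inner_le_norm (𝕜 := ℂ) (C (e k)) y
      exact pow_le_pow_left₀ (norm_nonneg _) this 2
    calc ‖x‖ ^ 2 ≤ ∑' k : K, ‖C (e k)‖ ^ 2 * ‖y‖ ^ 2 := h4
      _ = M * ‖y‖ ^ 2 := by rw [hM, tsum_mul_right]
  have hnorm : ‖C‖ ≤ Real.sqrt M := by
    rw [← (LinearIsometryEquiv.norm_map (adjoint (𝕜 := ℂ) (E := H1) (F := H0)) C)]
    refine opNorm_le_bound _ (Real.sqrt_nonneg _) fun y => ?_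
    have h6 : ‖adjoint C y‖ ≤ Real.sqrt (M * ‖y‖ ^ 2) := by
      rw [← Real.sqrt_sq (norm_nonneg (adjoint C y))]
      exact Real.sqrt_le_sqrt (key y)
    rwa [Real.sqrt_mul hM0, Real.sqrt_sq (norm_nonneg y)] at h6
  calc ‖C‖ ^ 2 ≤ Real.sqrt M ^ 2 := pow_le_pow_left₀ (norm_nonneg _) hnorm 2
    _ = M := Real.sq_sqrt hM0


/-- two-sided estimate for the variation `V(B)` of Section 2.
Let `A` be self-adjoint with spectrum `S ⊆ ℝ` and spectral measure `E`, and let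
`B : H1 → H0` be Hilbert–Schmidt (`Σ_k ‖B e_k‖² < ∞` for a Hilbert basis `e`).  With
`V(B) = sup_{partitions {δ_k} of S} Σ_k ‖B* E(δ_k) B‖`, one has `‖B‖² ≤ V(B) ≤ ‖B‖₂²`. -/
theorem variation_two_sided_estimate
    {H0 H1 : Type*}
    [NormedAddCommGroup H0] [InnerProductSpace ℂ H0] [CompleteSpace H0]
    [NormedAddCommGroup H1] [InnerProductSpace ℂ H1] [CompleteSpace H1]
    (A : H0 →ₗ.[ℂ] H0) (hA : IsSelfAdjoint A)
    -- `S` is the spectrum of `A` (a subset of the reals):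
    (S : Set ℝ)
    (hS : ∀ z : ℂ, (¬ ∃ R : H0 →L[ℂ] H0, IsBddResolventOf A z R) ↔ ∃ x ∈ S, z = (x : ℂ))
    -- `E` is the projection-valued spectral measure of `A`:
    (E : Set ℝ → (H0 →L[ℂ] H0))
    (hproj : ∀ s : Set ℝ, IsSelfAdjoint (E s) ∧ E s ∘L E s = E s)
    (hadd : ∀ s t : Set ℝ, MeasurableSet s → MeasurableSet t → Disjoint s t →
      E (s ∪ t) = E s + E t)
    (htotal : E S = 1)
    (hmul : ∀ s t : Set ℝ, E s ∘L E t = E (s ∩ t))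
    -- `B` is Hilbert–Schmidt with respect to a Hilbert basis `e` of `H1`:
    (B : H1 →L[ℂ] H0) (K : Type*) (e : HilbertBasis K ℂ H1)
    (hHS : Summable (fun k : K => ‖B (e k)‖ ^ 2)) :
    ‖B‖ ^ 2 ≤
      sSup {x : ℝ | ∃ (n : ℕ) (δ : Fin n → Set ℝ),
        (∀ k, MeasurableSet (δ k)) ∧
        (∀ k j, k ≠ j → Disjoint (δ k) (δ j)) ∧
        (⋃ k, δ k) = S ∧
        x = ∑ k, ‖(ContinuousLinearMap.adjoint B) ∘L E (δ k) ∘L B‖} ∧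
    sSup {x : ℝ | ∃ (n : ℕ) (δ : Fin n → Set ℝ),
        (∀ k, MeasurableSet (δ k)) ∧
        (∀ k j, k ≠ j → Disjoint (δ k) (δ j)) ∧
        (⋃ k, δ k) = S ∧
        x = ∑ k, ‖(ContinuousLinearMap.adjoint B) ∘L E (δ k) ∘L B‖} ≤
      ∑' k : K, ‖B (e k)‖ ^ 2 := by
  classical
  open ContinuousLinearMap in
  set T : Set ℝ := {x : ℝ | ∃ (n : ℕ) (δ : Fin n → Set ℝ),
        (∀ k, MeasurableSet (δ k)) ∧
        (∀ k j, k ≠ j → Disjoint (δ k) (δ j)) ∧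
        (⋃ k, δ k) = S ∧
        x = ∑ k, ‖(ContinuousLinearMap.adjoint B) ∘L E (δ k) ∘L B‖} with hT
  -- `S` is measurable
  have hSmeas : MeasurableSet S := by
    have hclosed : IsClosed {z : ℂ | ¬ ∃ R, IsBddResolventOf A z R} := by
      have h := (resolvent_isOpen A).isClosed_compl
      convert h using 1
      rfl
    have hSeq : S = (fun x : ℝ => (x : ℂ)) ⁻¹' {z : ℂ | ¬ ∃ R, IsBddResolventOf A z R} := by
      ext x
      simp only [Set.mem_preimage, Set.mem_setOf_eq, hS ((x : ℝ) : ℂ)]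
      constructor
      · exact fun h => ⟨x, h, rfl⟩
      · rintro ⟨y, hy, hxy⟩
        rwa [Complex.ofReal_inj.mp hxy]
    rw [hSeq]
    exact (hclosed.preimage Complex.continuous_ofReal).measurableSet
  -- basic facts about E
  have hEadj : ∀ s : Set ℝ, ContinuousLinearMap.adjoint (E s) = E s := fun s =>
    ContinuousLinearMap.isSelfAdjoint_iff'.mp (hproj s).1
  have hE0 : E ∅ = 0 := by
    have h := hadd ∅ ∅ MeasurableSet.empty MeasurableSet.empty (disjoint_bot_left)
    rw [Set.union_self] at h
    have := h.symm
    nth_rewrite 1 [← add_zero (E ∅)] at h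
    exact (add_left_cancel h).symm
  have hsum : ∀ (n : ℕ) (δ : Fin n → Set ℝ), (∀ k, MeasurableSet (δ k)) →
      (∀ k j, k ≠ j → Disjoint (δ k) (δ j)) → E (⋃ k, δ k) = ∑ k, E (δ k) := by
    intro n
    induction n with
    | zero =>
      intro δ _ _
      simp [Set.iUnion_of_empty, hE0]
    | succ n ih =>
      intro δ hm hd
      have hu : (⋃ k, δ k) = δ 0 ∪ ⋃ i : Fin n, δ i.succ := by
        ext x
        simp [Fin.exists_fin_succ]
      rw [hu, hadd _ _ (hm 0) (MeasurableSet.iUnion fun i => hm _)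
        (Set.disjoint_iUnion_right.2 fun i => hd 0 i.succ (Fin.succ_ne_zero i).symm),
        ih (fun i => δ i.succ) (fun i => hm _)
          (fun i j hij => hd _ _ (fun h => hij (Fin.succ_inj.mp h))),
        Fin.sum_univ_succ]
  -- projection identity
  have hP : ∀ (s : Set ℝ) (u : H0), ‖E s u‖ ^ 2 = (⟪u, E s u⟫_ℂ).re := by
    intro s u
    have h1 : ⟪E s u, E s u⟫_ℂ = ⟪u, E s u⟫_ℂ := by
      have h2 := ContinuousLinearMap.adjoint_inner_left (E s) (E s u) u
      rw [hEadj s] at h2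
      calc ⟪E s u, E s u⟫_ℂ = ⟪u, E s (E s u)⟫_ℂ := h2
        _ = ⟪u, (E s ∘L E s) u⟫_ℂ := rfl
        _ = ⟪u, E s u⟫_ℂ := by rw [(hproj s).2]
    rw [← h1]
    simpa using (inner_self_eq_norm_sq (𝕜 := ℂ) (E s u)).symm
  -- per-partition upper bound
  have hbound : ∀ x ∈ T, x ≤ ∑' k : K, ‖B (e k)‖ ^ 2 := by
    rintro x ⟨n, δ, hm, hd, hu, rfl⟩
    have hone : ∑ k, E (δ k) = 1 := by rw [← hsum n δ hm hd, hu, htotal]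
    have hterm : ∀ k : Fin n,
        ‖(ContinuousLinearMap.adjoint B) ∘L E (δ k) ∘L B‖ = ‖E (δ k) ∘L B‖ ^ 2 := by
      intro k
      have hrw : (ContinuousLinearMap.adjoint B) ∘L E (δ k) ∘L B
          = ContinuousLinearMap.adjoint (E (δ k) ∘L B) ∘L (E (δ k) ∘L B) := by
        rw [ContinuousLinearMap.adjoint_comp, hEadj, ContinuousLinearMap.comp_assoc,
          ← ContinuousLinearMap.comp_assoc (E (δ k)) (E (δ k)) B, (hproj (δ k)).2]
      rw [hrw, ContinuousLinearMap.norm_adjoint_comp_self, sq]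
    have hsummand : ∀ k : Fin n, Summable fun j : K => ‖(E (δ k) ∘L B) (e j)‖ ^ 2 := by
      intro k
      refine Summable.of_nonneg_of_le (fun j => by positivity) (fun j => ?_) (hHS.mul_left (‖E (δ k)‖ ^ 2))
      rw [ContinuousLinearMap.comp_apply, ← mul_pow]
      exact pow_le_pow_left₀ (norm_nonneg _) ((E (δ k)).le_opNorm _) 2
    calc ∑ k, ‖(ContinuousLinearMap.adjoint B) ∘L E (δ k) ∘L B‖
        = ∑ k, ‖E (δ k) ∘L B‖ ^ 2 := Finset.sum_congr rfl fun k _ => hterm k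
      _ ≤ ∑ k, ∑' j : K, ‖(E (δ k) ∘L B) (e j)‖ ^ 2 :=
          Finset.sum_le_sum fun k _ => opnorm_sq_le_tsum e _ (hsummand k)
      _ = ∑' j : K, ∑ k, ‖(E (δ k) ∘L B) (e j)‖ ^ 2 :=
          (Summable.tsum_finsetSum fun k _ => hsummand k).symm
      _ = ∑' j : K, ‖B (e j)‖ ^ 2 := by
          refine tsum_congr fun j => ?_
          have : ∑ k, ‖(E (δ k) ∘L B) (e j)‖ ^ 2
              = ∑ k, (⟪B (e j), E (δ k) (B (e j))⟫_ℂ).re :=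
            Finset.sum_congr rfl fun k _ => by
              rw [ContinuousLinearMap.comp_apply, hP]
          rw [this, ← Complex.re_sum, ← inner_sum]
          have hsum_apply : (∑ k, E (δ k) (B (e j))) = (∑ k, E (δ k)) (B (e j)) := by
            rw [ContinuousLinearMap.sum_apply]
          rw [hsum_apply, hone, ContinuousLinearMap.one_apply]
          simpa using inner_self_eq_norm_sq (𝕜 := ℂ) (B (e j))
  -- the trivial partition shows `‖B‖ ^ 2 ∈ T`
  have hmem : ‖B‖ ^ 2 ∈ T := by
    refine ⟨1, fun _ => S, fun _ => hSmeas, fun k j hkj => absurd (Subsingleton.elim k j) hkj,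
      Set.iUnion_const S, ?_⟩
    rw [Fin.sum_univ_one, htotal]
    have : (ContinuousLinearMap.adjoint B) ∘L (1 : H0 →L[ℂ] H0) ∘L B
        = ContinuousLinearMap.adjoint B ∘L B := by
      rw [ContinuousLinearMap.one_def, ContinuousLinearMap.id_comp]
    rw [this, ContinuousLinearMap.norm_adjoint_comp_self, sq]
  have hbdd : BddAbove T := ⟨∑' k : K, ‖B (e k)‖ ^ 2, fun x hx => hbound x hx⟩
  exact ⟨le_csSup hbdd hmem, csSup_le ⟨_, hmem⟩ hbound⟩
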